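/- For any two Laplace distributions with common scale b > 0 and means m₁, m₂, the max-divergence (Rényi divergence of order ∞) satisfies d_∞(Laplace(m₁,b) ‖ Laplace(m₂,b)) = |m₁ − m₂| / b, i.e. sup over measurable sets S of log( P[Laplace(m₁,b) ∈ S] / P[Laplace(m₂,b) ∈ S] ) equals |m₁ − m₂|/b. -/

import Mathlib

open MeasureTheory Real Set Filter Topology

/-- The Laplace(m,b) measure on ℝ, given by its density. -/
noncomputable def laplaceMeasure (m b : ℝ) : Measure ℝ :=
  MeasureTheory.volume.withDensity
    (fun x => ENNReal.ofReal ((1 / (2 * b)) * Real.exp (-|x - m| / b)))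

lemma lap_intOn_Iic (b m t : ℝ) (hb : 0 < b) :
    IntegrableOn (fun x => rexp ((x - m) / b)) (Iic t) := by
  have hfun : (fun x : ℝ => rexp ((x - m) / b)) = fun x => rexp (x / b) * rexp (-m / b) := by
    funext x; rw [← Real.exp_add]; congr 1; ring
  rw [hfun]
  refine Integrable.mul_const ?_ _
  have hind : Integrable ((Iic (t / b)).indicator rexp) :=
    (integrableOn_exp_Iic (t / b)).integrable_indicator measurableSet_Iic
  have h2 : Integrable (fun x => ((Iic (t / b)).indicator rexp) (x / b)) :=
    (integrable_comp_div_iff ((Iic (t / b)).indicator rexp) hb.ne').2 hind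
  refine (integrable_indicator_iff measurableSet_Iic).1 ?_
  refine h2.congr (ae_of_all _ fun x => ?_)
  beta_reduce
  by_cases hx : x ≤ t
  · have hx' : x / b ≤ t / b := by gcongr
    rw [indicator_of_mem (mem_Iic.mpr hx), indicator_of_mem (mem_Iic.mpr hx')]
  · have hx' : ¬ x / b ≤ t / b := by
      intro h
      apply hx
      have := mul_le_mul_of_nonneg_right h hb.le
      rwa [div_mul_cancel₀ _ hb.ne', div_mul_cancel₀ _ hb.ne'] at this
    rw [indicator_of_notMem (fun h => hx (mem_Iic.mp h)),
      indicator_of_notMem (fun h => hx' (mem_Iic.mp h))]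

lemma lap_intval_Iic (b m t : ℝ) (hb : 0 < b) :
    ∫ x in Iic t, rexp ((x - m) / b) = b * rexp ((t - m) / b) := by
  have hderiv : ∀ x ∈ Iic t,
      HasDerivAt (fun x => b * rexp ((x - m) / b)) (rexp ((x - m) / b)) x := by
    intro x _
    have h := ((((hasDerivAt_id x).sub_const m).div_const b).exp).const_mul b
    refine h.congr_deriv ?_
    simp only [id]
    field_simp
  have htend : Tendsto (fun x => b * rexp ((x - m) / b)) atBot (𝓝 0) := by
    rw [show (0:ℝ) = b * 0 by ring]
    apply Tendsto.const_mul
    apply Real.tendsto_exp_atBot.comp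
    apply Tendsto.atBot_div_const hb
    simpa [sub_eq_add_neg] using tendsto_atBot_add_const_right atBot (-m) tendsto_id
  have := integral_Iic_of_hasDerivAt_of_tendsto' hderiv (lap_intOn_Iic b m t hb) htend
  simpa using this

lemma lap_intOn_Ioi (b m t : ℝ) (hb : 0 < b) :
    IntegrableOn (fun x => rexp ((m - x) / b)) (Ioi t) := by
  have hfun : (fun x : ℝ => rexp ((m - x) / b)) = fun x => rexp (-b⁻¹ * x) * rexp (m / b) := by
    funext x; rw [← Real.exp_add]; congr 1; field_simp; ring
  rw [hfun]
  exact (exp_neg_integrableOn_Ioi t (show (0:ℝ) < b⁻¹ by positivity)).mul_const _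

lemma lap_intval_Ioi (b m t : ℝ) (hb : 0 < b) :
    ∫ x in Ioi t, rexp ((m - x) / b) = b * rexp ((m - t) / b) := by
  have hderiv : ∀ x ∈ Ici t,
      HasDerivAt (fun x => -b * rexp ((m - x) / b)) (rexp ((m - x) / b)) x := by
    intro x _
    have h := ((((hasDerivAt_id x).const_sub m).div_const b).exp).const_mul (-b)
    refine h.congr_deriv ?_
    simp only [id]
    field_simp
  have htend : Tendsto (fun x => -b * rexp ((m - x) / b)) atTop (𝓝 0) := by
    rw [show (0:ℝ) = -b * 0 by ring]
    apply Tendsto.const_mul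
    apply Real.tendsto_exp_atBot.comp
    apply Tendsto.atBot_div_const hb
    have h0 : Tendsto (fun x : ℝ => -x) atTop atBot := tendsto_neg_atTop_atBot
    have h1 : Tendsto (fun x : ℝ => -x + m) atTop atBot :=
      tendsto_atBot_add_const_right atTop m h0
    exact h1.congr (fun x => by ring)
  have := integral_Ioi_of_hasDerivAt_of_tendsto' hderiv (lap_intOn_Ioi b m t hb) htend
  rw [this]; ring

lemma lap_Iic (m b t : ℝ) (hb : 0 < b) (ht : t ≤ m) :
    laplaceMeasure m b (Iic t) = ENNReal.ofReal (rexp ((t - m) / b) / 2) := by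
  rw [laplaceMeasure, withDensity_apply _ measurableSet_Iic]
  have h1 : ∀ᵐ x ∂volume, x ∈ Iic t →
      ENNReal.ofReal ((1 / (2 * b)) * rexp (-|x - m| / b))
        = ENNReal.ofReal ((1 / (2 * b)) * rexp ((x - m) / b)) := by
    refine ae_of_all _ fun x hx => ?_
    rw [abs_of_nonpos (by simp only [Set.mem_Iic] at hx; linarith), neg_neg]
  rw [setLIntegral_congr_fun_ae measurableSet_Iic h1,
    ← ofReal_integral_eq_lintegral_ofReal ((lap_intOn_Iic b m t hb).const_mul _)
      (ae_of_all _ fun x => by positivity)]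
  rw [integral_const_mul, lap_intval_Iic b m t hb]
  congr 1
  field_simp

lemma lap_Ici (m b t : ℝ) (hb : 0 < b) (ht : m ≤ t) :
    laplaceMeasure m b (Ici t) = ENNReal.ofReal (rexp ((m - t) / b) / 2) := by
  rw [laplaceMeasure, withDensity_apply _ measurableSet_Ici,
    ← setLIntegral_congr (Ioi_ae_eq_Ici (a := t))]
  have h1 : ∀ᵐ x ∂volume, x ∈ Ioi t →
      ENNReal.ofReal ((1 / (2 * b)) * rexp (-|x - m| / b))
        = ENNReal.ofReal ((1 / (2 * b)) * rexp ((m - x) / b)) := by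
    refine ae_of_all _ fun x hx => ?_
    rw [abs_of_nonneg (by simp only [Set.mem_Ioi] at hx; linarith)]
    congr 2
    ring
  rw [setLIntegral_congr_fun_ae measurableSet_Ioi h1,
    ← ofReal_integral_eq_lintegral_ofReal ((lap_intOn_Ioi b m t hb).const_mul _)
      (ae_of_all _ fun x => by positivity)]
  rw [integral_const_mul, lap_intval_Ioi b m t hb]
  congr 1
  field_simp

lemma lap_ne_top (m b : ℝ) (hb : 0 < b) (S : Set ℝ) : laplaceMeasure m b S ≠ ⊤ := by
  have h : laplaceMeasure m b S ≤ laplaceMeasure m b (Iic m) + laplaceMeasure m b (Ici m) := by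
    refine le_trans (measure_mono ?_) (measure_union_le _ _)
    rw [Iic_union_Ici]
    exact subset_univ S
  rw [lap_Iic m b m hb le_rfl, lap_Ici m b m hb le_rfl] at h
  exact ne_top_of_le_ne_top (by simp) h

lemma lap_density_meas (m b : ℝ) :
    Measurable (fun x => ENNReal.ofReal ((1 / (2 * b)) * Real.exp (-|x - m| / b))) := by
  fun_prop

/-- Max-divergence (Rényi divergence of order ∞) between two Laplace distributions
with common scale `b`: the supremum over measurable sets of
`log(P₁(S)/P₂(S))` equals `|m₁ - m₂|/b`, and it is attained. -/
theorem laplace_max_divergence (b m₁ m₂ : ℝ) (hb : 0 < b) :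
    IsGreatest
      {x : ℝ | ∃ S : Set ℝ, MeasurableSet S ∧ laplaceMeasure m₂ b S ≠ 0 ∧
        x = Real.log ((laplaceMeasure m₁ b S).toReal / (laplaceMeasure m₂ b S).toReal)}
      (|m₁ - m₂| / b) := by
  constructor
  · -- membership: the bound is attained
    rcases le_total m₁ m₂ with hle | hle
    · refine ⟨Iic m₁, measurableSet_Iic, ?_, ?_⟩
      · rw [lap_Iic m₂ b m₁ hb hle]
        simp only [ne_eq, ENNReal.ofReal_eq_zero, not_le]
        positivity
      · rw [lap_Iic m₂ b m₁ hb hle, lap_Iic m₁ b m₁ hb le_rfl,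
          ENNReal.toReal_ofReal (by positivity), ENNReal.toReal_ofReal (by positivity)]
        have hval : rexp ((m₁ - m₁) / b) / 2 / (rexp ((m₁ - m₂) / b) / 2)
            = rexp ((m₂ - m₁) / b) := by
          rw [div_div_div_cancel_right₀ (two_ne_zero), ← Real.exp_sub]
          congr 1; ring
        rw [hval, Real.log_exp, abs_of_nonpos (by linarith : m₁ - m₂ ≤ 0)]
        ring
    · refine ⟨Ici m₁, measurableSet_Ici, ?_, ?_⟩
      · rw [lap_Ici m₂ b m₁ hb hle]
        simp only [ne_eq, ENNReal.ofReal_eq_zero, not_le]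
        positivity
      · rw [lap_Ici m₂ b m₁ hb hle, lap_Ici m₁ b m₁ hb le_rfl,
          ENNReal.toReal_ofReal (by positivity), ENNReal.toReal_ofReal (by positivity)]
        have hval : rexp ((m₁ - m₁) / b) / 2 / (rexp ((m₂ - m₁) / b) / 2)
            = rexp ((m₁ - m₂) / b) := by
          rw [div_div_div_cancel_right₀ (two_ne_zero), ← Real.exp_sub]
          congr 1; ring
        rw [hval, Real.log_exp, abs_of_nonneg (by linarith : 0 ≤ m₁ - m₂)]
  · -- upper bound
    rintro x ⟨S, hS, hS0, rfl⟩
    set c : ℝ := |m₁ - m₂| / b with hc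
    have hc0 : 0 ≤ c := by positivity
    -- key measure inequality
    have hmeas : laplaceMeasure m₁ b S ≤ ENNReal.ofReal (rexp c) * laplaceMeasure m₂ b S := by
      rw [laplaceMeasure, laplaceMeasure, withDensity_apply _ hS, withDensity_apply _ hS,
        ← lintegral_const_mul _ ((lap_density_meas m₂ b))]
      apply lintegral_mono
      intro x
      dsimp only
      rw [← ENNReal.ofReal_mul (exp_pos _).le]
      apply ENNReal.ofReal_le_ofReal
      rw [show rexp c * ((1 / (2 * b)) * rexp (-|x - m₂| / b))
          = (1 / (2 * b)) * (rexp c * rexp (-|x - m₂| / b)) by ring, ← Real.exp_add]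
      apply mul_le_mul_of_nonneg_left _ (by positivity)
      apply Real.exp_le_exp.mpr
      have key : -|x - m₁| ≤ |m₁ - m₂| + -|x - m₂| := by
        have h := abs_sub_abs_le_abs_sub (x - m₂) (x - m₁)
        have h2 : x - m₂ - (x - m₁) = m₁ - m₂ := by ring
        rw [h2, abs_sub_comm m₁ m₂] at h
        rw [abs_sub_comm m₁ m₂]
        linarith
      rw [hc, ← add_div]
      gcongr
    have h1top := lap_ne_top m₁ b hb S
    have h2top := lap_ne_top m₂ b hb S
    have h2pos : 0 < (laplaceMeasure m₂ b S).toReal := ENNReal.toReal_pos hS0 h2top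
    have hreal : (laplaceMeasure m₁ b S).toReal ≤ rexp c * (laplaceMeasure m₂ b S).toReal := by
      have := ENNReal.toReal_mono (ENNReal.mul_ne_top ENNReal.ofReal_ne_top h2top) hmeas
      rwa [ENNReal.toReal_mul, ENNReal.toReal_ofReal (exp_pos _).le] at this
    have hdiv : (laplaceMeasure m₁ b S).toReal / (laplaceMeasure m₂ b S).toReal ≤ rexp c :=
      (div_le_iff₀ h2pos).mpr hreal
    rcases eq_or_lt_of_le (ENNReal.toReal_nonneg :
        (0:ℝ) ≤ (laplaceMeasure m₁ b S).toReal) with h1z | h1pos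
    · rw [← h1z, zero_div, Real.log_zero]; exact hc0
    · have hratio : 0 < (laplaceMeasure m₁ b S).toReal / (laplaceMeasure m₂ b S).toReal :=
        div_pos h1pos h2pos
      calc Real.log _ ≤ Real.log (rexp c) := Real.log_le_log hratio hdiv
        _ = c := Real.log_exp c
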